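/- The sequence ρ(h) = ((29/3)·2^h − 4h − 26/3) / ((200/21)·2^h − 4h + (2√2/7)·2^{h/2} − 28/3) converges to 203/200 as h → ∞, and ρ(h) ≤ 203/200 for all h ≥ 4. -/

import Mathlib

open Filter

private lemma nat_sq_le_two_pow : ∀ n : ℕ, 4 ≤ n → n ^ 2 ≤ 2 ^ n := by
  intro n hn
  induction n with
  | zero => omega
  | succ m ih =>
    rcases Nat.lt_or_ge m 4 with hm | hm
    · have hm3 : m = 3 := by omega
      subst hm3; norm_num
    · have h1 := ih (by omega)
      have : (m + 1) ^ 2 ≤ 2 * m ^ 2 := by nlinarith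
      calc (m + 1) ^ 2 ≤ 2 * m ^ 2 := this
        _ ≤ 2 * 2 ^ m := by omega
        _ = 2 ^ (m + 1) := by ring

/-- The approximation-ratio sequence
`ρ(h) = ((29/3)·2^h − 4h − 26/3) / ((200/21)·2^h − 4h + (2√2/7)·2^(h/2) − 28/3)`
tends to `203/200` as `h → ∞`, and `ρ(h) ≤ 203/200` for all `h ≥ 4`. -/
theorem approximation_ratio_limit (ρ : ℕ → ℝ)
    (hρ : ∀ h : ℕ, ρ h =
      (29/3 * 2 ^ h - 4 * (h : ℝ) - 26/3) /
        (200/21 * 2 ^ h - 4 * (h : ℝ) + 2 * Real.sqrt 2 / 7 * (2 : ℝ) ^ ((h : ℝ) / 2)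
          - 28/3)) :
    Tendsto ρ atTop (nhds (203/200)) ∧ ∀ h : ℕ, 4 ≤ h → ρ h ≤ 203/200 := by
  set s : ℝ := Real.sqrt 2 with hs_def
  have hs0 : (0:ℝ) ≤ s := Real.sqrt_nonneg 2
  have hs2 : s ^ 2 = 2 := Real.sq_sqrt (by norm_num)
  have hs14 : (1.4:ℝ) ≤ s := by nlinarith
  have hs_lt2 : s < 2 := by nlinarith
  -- rewrite the rpow term
  have hrp : ∀ h : ℕ, (2 : ℝ) ^ ((h : ℝ) / 2) = s ^ h := by
    intro h
    rw [hs_def, Real.sqrt_eq_rpow, ← Real.rpow_natCast ((2:ℝ) ^ ((1:ℝ)/2)) h,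
      ← Real.rpow_mul (by norm_num)]
    ring_nf
  -- facts for a fixed h ≥ 4
  have hxh : ∀ h : ℕ, 4 ≤ h → (h : ℝ) ≤ s ^ h := by
    intro h hh
    have h1 : ((h:ℝ)) ^ 2 ≤ 2 ^ h := by
      have := nat_sq_le_two_pow h hh
      calc ((h:ℝ)) ^ 2 = ((h ^ 2 : ℕ) : ℝ) := by push_cast; ring
        _ ≤ ((2 ^ h : ℕ) : ℝ) := by exact_mod_cast this
        _ = 2 ^ h := by push_cast; ring
    have h2 : (s ^ h) ^ 2 = 2 ^ h := by
      rw [← pow_mul, mul_comm, pow_mul, hs2]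
    have h3 : (0:ℝ) ≤ s ^ h := pow_nonneg hs0 h
    nlinarith [sq_nonneg ((h:ℝ) - s ^ h)]
  have hDpos : ∀ h : ℕ, 4 ≤ h →
      0 < 200/21 * (2:ℝ) ^ h - 4 * (h : ℝ) + 2 * s / 7 * s ^ h - 28/3 := by
    intro h hh
    have hx := hxh h hh
    have h4 : (4:ℝ) ≤ (h:ℝ) := by exact_mod_cast hh
    have h2 : (s ^ h) ^ 2 = 2 ^ h := by
      rw [← pow_mul, mul_comm, pow_mul, hs2]
    have h3 : (0:ℝ) ≤ s ^ h := pow_nonneg hs0 h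
    nlinarith [mul_nonneg (by linarith : (0:ℝ) ≤ s - 1.4) h3]
  -- The inequality part
  have hineq : ∀ h : ℕ, 4 ≤ h → ρ h ≤ 203/200 := by
    intro h hh
    rw [hρ h, hrp h]
    rw [div_le_iff₀ (hDpos h hh)]
    have hx := hxh h hh
    have h4 : (4:ℝ) ≤ (h:ℝ) := by exact_mod_cast hh
    have h3 : (0:ℝ) ≤ s ^ h := pow_nonneg hs0 h
    nlinarith [mul_nonneg (by linarith : (0:ℝ) ≤ s - 1.4) h3,
      mul_le_mul_of_nonneg_left hx (by linarith : (0:ℝ) ≤ 203/200 * (2 * s / 7))]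
  refine ⟨?_, hineq⟩
  -- the limit part
  set g : ℕ → ℝ := fun h =>
    (29/3 - 4 * ((h:ℝ) * (1/2) ^ h) - 26/3 * (1/2) ^ h) /
      (200/21 - 4 * ((h:ℝ) * (1/2) ^ h) + 2 * s / 7 * (s/2) ^ h - 28/3 * (1/2) ^ h)
    with hg_def
  have hcongr : ∀ h : ℕ, ρ h = g h := by
    intro h
    have h20 : ((2:ℝ) ^ h) ≠ 0 := by positivity
    rw [hρ h, hrp h, hg_def]
    rw [← mul_div_mul_right
      (29/3 * (2:ℝ) ^ h - 4 * (h : ℝ) - 26/3) _ (inv_ne_zero h20)]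
    have h12 : ((1:ℝ)/2) ^ h * 2 ^ h = 1 := by
      rw [← mul_pow]; norm_num
    congr 1
    · field_simp
      linear_combination (12 * (h:ℝ) + 26) * h12
    · field_simp
      linear_combination (4116 + 1764 * (h:ℝ) - 126 * s * s ^ h) * h12
  have t1 : Tendsto (fun h : ℕ => (h:ℝ) * (1/2) ^ h) atTop (nhds 0) :=
    tendsto_self_mul_const_pow_of_lt_one (by norm_num) (by norm_num)
  have t2 : Tendsto (fun h : ℕ => ((1:ℝ)/2) ^ h) atTop (nhds 0) :=
    tendsto_pow_atTop_nhds_zero_of_lt_one (by norm_num) (by norm_num)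
  have t3 : Tendsto (fun h : ℕ => (s/2) ^ h) atTop (nhds 0) :=
    tendsto_pow_atTop_nhds_zero_of_lt_one (by positivity) (by linarith)
  have tnum : Tendsto (fun h : ℕ =>
      29/3 - 4 * ((h:ℝ) * (1/2) ^ h) - 26/3 * (1/2) ^ h) atTop (nhds (29/3)) := by
    simpa using ((tendsto_const_nhds (x := (29/3 : ℝ)) (f := atTop)).sub
      (t1.const_mul 4)).sub (t2.const_mul (26/3))
  have tden : Tendsto (fun h : ℕ =>
      200/21 - 4 * ((h:ℝ) * (1/2) ^ h) + 2 * s / 7 * (s/2) ^ h - 28/3 * (1/2) ^ h)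
      atTop (nhds (200/21)) := by
    have := (((tendsto_const_nhds (x := (200/21 : ℝ)) (f := atTop)).sub
      (t1.const_mul 4)).add (t3.const_mul (2 * s / 7))).sub (t2.const_mul (28/3))
    simpa using this
  have tg : Tendsto g atTop (nhds ((29/3) / (200/21))) := tnum.div tden (by norm_num)
  have : ((29:ℝ)/3) / (200/21) = 203/200 := by norm_num
  rw [← this]
  exact tg.congr (fun h => (hcongr h).symm)
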